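/- arXiv:2507.21797 — 3 statements merged into one kernel-verified Lean document; each statement's English description precedes it below -/
import Mathlib

section
/- Fix τ̂ > 0 and γ > 0, and let c_bp := -(12γ/(√2 τ̂²))^{1/3} and α_bp := ((√2/3)c_bp - γ) · √(4 + c_bp²τ̂²)/(c_bp τ̂). Then c_bp < 0 and the function F(c) = (√2/3)c - α_bp·cτ̂/√(c²τ̂²+4) - γ satisfies F(c_bp) = 0 and F'(c_bp) = 0, i.e. (c_bp, α_bp) is a degenerate (fold point) solution of the travelling-front existence condition. -/
/-- At the fold point: c_bp = -(12γ/(√2 τ̂²))^{1/3} < 0 and, with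
α_bp = ((√2/3)c_bp - γ)·√(4+c_bp²τ̂²)/(c_bp τ̂), the function
F(c) = (√2/3)c - α_bp·cτ̂/√(c²τ̂²+4) - γ satisfies F(c_bp) = 0 and F'(c_bp) = 0. -/
theorem fold_point (τ γ : ℝ) (hτ : 0 < τ) (hγ : 0 < γ) :
    let cbp : ℝ := -((12 * γ / (Real.sqrt 2 * τ ^ 2)) ^ ((1 : ℝ) / 3))
    let αbp : ℝ := (Real.sqrt 2 / 3 * cbp - γ) * Real.sqrt (4 + cbp ^ 2 * τ ^ 2) / (cbp * τ)
    let F : ℝ → ℝ := fun c =>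
      Real.sqrt 2 / 3 * c - αbp * (c * τ / Real.sqrt (c ^ 2 * τ ^ 2 + 4)) - γ
    cbp < 0 ∧ F cbp = 0 ∧ deriv F cbp = 0 := by
  intro cbp αbp F
  have h2 : (0:ℝ) < Real.sqrt 2 := Real.sqrt_pos.mpr (by norm_num)
  have h2sq : Real.sqrt 2 ^ 2 = 2 := Real.sq_sqrt (by norm_num)
  have hA : (0:ℝ) < 12 * γ / (Real.sqrt 2 * τ ^ 2) := by positivity
  have hcneg : cbp < 0 := by
    have := Real.rpow_pos_of_pos hA ((1:ℝ)/3)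
    simp only [cbp]; linarith
  have hc0 : cbp ≠ 0 := ne_of_lt hcneg
  have hc3 : cbp ^ 3 = -(12 * γ / (Real.sqrt 2 * τ ^ 2)) := by
    have : ((12 * γ / (Real.sqrt 2 * τ ^ 2)) ^ ((1:ℝ)/3)) ^ (3:ℕ)
        = 12 * γ / (Real.sqrt 2 * τ ^ 2) := by
      rw [← Real.rpow_natCast ((12 * γ / (Real.sqrt 2 * τ ^ 2)) ^ ((1:ℝ)/3)) 3,
        ← Real.rpow_mul hA.le]
      norm_num
    simp only [cbp]
    rw [neg_pow]
    rw [this]; ring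
  have hkey : Real.sqrt 2 * cbp ^ 3 * τ ^ 2 = -(12 * γ) := by
    rw [hc3]; field_simp
  set q : ℝ := cbp ^ 2 * τ ^ 2 + 4 with hqdef
  have hq : 0 < q := by positivity
  set r : ℝ := Real.sqrt q with hrdef
  have hr : 0 < r := Real.sqrt_pos.mpr hq
  have hr2 : r ^ 2 = q := Real.sq_sqrt hq.le
  have hsw : Real.sqrt (4 + cbp ^ 2 * τ ^ 2) = r := by rw [hrdef, hqdef, add_comm]
  have hαbp : αbp = (Real.sqrt 2 / 3 * cbp - γ) * r / (cbp * τ) := by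
    simp only [αbp, hsw]
  have hF0 : F cbp = 0 := by
    simp only [F, hαbp]
    rw [show cbp ^ 2 * τ ^ 2 + 4 = q from rfl, ← hrdef]
    field_simp
    ring
  refine ⟨hcneg, hF0, ?_⟩
  have h1 : HasDerivAt (fun c : ℝ => c ^ 2 * τ ^ 2 + 4) (2 * cbp * τ ^ 2) cbp := by
    have := ((hasDerivAt_pow 2 cbp).mul_const (τ ^ 2)).add_const 4
    exact this.congr_deriv (by norm_num)
  have hsq : HasDerivAt (fun c : ℝ => Real.sqrt (c ^ 2 * τ ^ 2 + 4))
      ((2 * cbp * τ ^ 2) / (2 * r)) cbp := by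
    have := h1.sqrt (by rw [show cbp ^ 2 * τ ^ 2 + 4 = q from rfl]; exact hq.ne')
    convert this using 2
  have hnum : HasDerivAt (fun c : ℝ => c * τ) τ cbp := by
    simpa using (hasDerivAt_id cbp).mul_const τ
  have hdiv : HasDerivAt (fun c : ℝ => c * τ / Real.sqrt (c ^ 2 * τ ^ 2 + 4))
      ((τ * r - cbp * τ * ((2 * cbp * τ ^ 2) / (2 * r))) / r ^ 2) cbp := by
    have := hnum.div hsq (by
      rw [show Real.sqrt (cbp ^ 2 * τ ^ 2 + 4) = r from rfl]; exact hr.ne')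
    exact this
  have hF : HasDerivAt F
      (Real.sqrt 2 / 3 * 1 - αbp * ((τ * r - cbp * τ * ((2 * cbp * τ ^ 2) / (2 * r))) / r ^ 2))
      cbp := by
    exact (((hasDerivAt_id cbp).const_mul (Real.sqrt 2 / 3)).sub (hdiv.const_mul αbp)).sub_const γ
  rw [hF.deriv, hαbp]
  field_simp
  linear_combination hkey + (3*γ)*hr2 + (3*γ)*hqdef
end

section
/- Fix τ̂ > 0 and γ > 0. For each α ∈ ℝ, let N(α) be the number of real solutions c of (√2/3)c = α·cτ̂/√(c²τ̂²+4) + γ. Then there exists α_bp > 0 such that N(α) = 1 for α < α_bp and N(α) = 3 for α > α_bp. -/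
open Real Set

namespace EB


variable (τ : ℝ)

noncomputable def q (c : ℝ) : ℝ := Real.sqrt (c ^ 2 * τ ^ 2 + 4)

lemma arg_pos (c : ℝ) : (0:ℝ) < c ^ 2 * τ ^ 2 + 4 := by positivity

lemma q_pos (c : ℝ) : 0 < q τ c := Real.sqrt_pos.mpr (arg_pos τ c)

lemma q_sq (c : ℝ) : q τ c ^ 2 = c ^ 2 * τ ^ 2 + 4 :=
  Real.sq_sqrt (arg_pos τ c).le

lemma two_le_q (c : ℝ) : 2 ≤ q τ c := by
  have h := q_sq τ c
  nlinarith [q_pos τ c, sq_nonneg (c * τ)]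

lemma q_neg (c : ℝ) : q τ (-c) = q τ c := by simp [q]

noncomputable def F (α c : ℝ) : ℝ := Real.sqrt 2 / 3 * c - α * (c * τ / q τ c)

lemma F_neg (α c : ℝ) : F τ α (-c) = - F τ α c := by
  simp only [F, q_neg]
  ring

lemma F_cont (α : ℝ) : Continuous (F τ α) := by
  apply Continuous.sub
  · exact continuous_const.mul continuous_id
  · exact continuous_const.mul
      (((continuous_id.mul continuous_const).div
        (Real.continuous_sqrt.comp (by continuity)) (fun c => (q_pos τ c).ne')))

lemma F_hasDerivAt (α c : ℝ) :
    HasDerivAt (F τ α) (Real.sqrt 2 / 3 - 4 * α * τ / q τ c ^ 3) c := by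
  have hg : HasDerivAt (fun c : ℝ => c ^ 2 * τ ^ 2 + 4) (2 * c * τ ^ 2) c := by
    simpa using ((hasDerivAt_pow 2 c).mul_const (τ ^ 2)).add_const 4
  have hq : HasDerivAt (q τ) ((q τ c)⁻¹ * 2⁻¹ * (2 * c * τ ^ 2)) c := by
    have h := (Real.hasDerivAt_sqrt (arg_pos τ c).ne').comp c hg
    rw [show (q τ c)⁻¹ * 2⁻¹ * (2 * c * τ ^ 2)
        = 1 / (2 * Real.sqrt (c ^ 2 * τ ^ 2 + 4)) * (2 * c * τ ^ 2) by rw [q]; ring]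
    exact h
  have hnum : HasDerivAt (fun c : ℝ => c * τ) τ c := by
    simpa using (hasDerivAt_id c).mul_const τ
  have hdiv := hnum.div hq (q_pos τ c).ne'
  have hmain : HasDerivAt (fun c => c * τ / q τ c)
      ((τ * q τ c - c * τ * ((q τ c)⁻¹ * 2⁻¹ * (2 * c * τ ^ 2))) / q τ c ^ 2) c := hdiv
  have key : (τ * q τ c - c * τ * ((q τ c)⁻¹ * 2⁻¹ * (2 * c * τ ^ 2))) / q τ c ^ 2
      = 4 * τ / q τ c ^ 3 := by
    have h2 := q_sq τ c
    have h0 := (q_pos τ c).ne'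
    field_simp
    linear_combination τ * h2
  rw [key] at hmain
  have h := ((hasDerivAt_id c).const_mul (Real.sqrt 2 / 3)).sub (hmain.const_mul α)
  rw [show Real.sqrt 2 / 3 - 4 * α * τ / q τ c ^ 3
      = Real.sqrt 2 / 3 * 1 - α * (4 * τ / q τ c ^ 3) by ring]
  exact h

noncomputable def A (p : ℝ) : ℝ := Real.sqrt 2 * q τ p ^ 3 / (12 * τ)

lemma A_cont : Continuous (A τ) := by
  unfold A q
  fun_prop

lemma q_zero : q τ 0 = 2 := by
  rw [q, show (0:ℝ) ^ 2 * τ ^ 2 + 4 = 2 ^ 2 by ring, Real.sqrt_sq (by norm_num)]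

lemma A_zero : A τ 0 = 2 * Real.sqrt 2 / (3 * τ) := by
  rw [A, q_zero]; ring

lemma q_lt_q {p c : ℝ} (h : p ^ 2 < c ^ 2) (hτ : 0 < τ) : q τ p < q τ c :=
  Real.sqrt_lt_sqrt (arg_pos τ p).le
    (by nlinarith [mul_lt_mul_of_pos_right h (mul_pos hτ hτ)])

lemma A_strictMonoOn (hτ : 0 < τ) : StrictMonoOn (A τ) (Ici 0) := by
  intro a ha b hb hab
  have hq : q τ a < q τ b := q_lt_q τ (by simp at ha hb; nlinarith) hτ
  have h3 : q τ a ^ 3 < q τ b ^ 3 := pow_lt_pow_left₀ hq (q_pos τ a).le (by norm_num)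
  have h2 : 0 < Real.sqrt 2 := Real.sqrt_pos.mpr (by norm_num)
  unfold A
  rw [div_lt_div_iff₀ (by positivity) (by positivity)]
  nlinarith [mul_pos (mul_pos h2 (sub_pos.mpr h3)) hτ]

lemma deriv_pos (hτ : 0 < τ) {p c : ℝ} (h : p ^ 2 < c ^ 2) :
    0 < Real.sqrt 2 / 3 - 4 * A τ p * τ / q τ c ^ 3 := by
  have hq : q τ p < q τ c := q_lt_q τ h hτ
  have hqp := q_pos τ p
  have hqc := q_pos τ c
  have h3 : q τ p ^ 3 < q τ c ^ 3 := pow_lt_pow_left₀ hq hqp.le (by norm_num)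
  have h2 : 0 < Real.sqrt 2 := Real.sqrt_pos.mpr (by norm_num)
  have key : 4 * A τ p * τ / q τ c ^ 3 = Real.sqrt 2 * q τ p ^ 3 / (3 * q τ c ^ 3) := by
    unfold A; field_simp; ring
  rw [key, sub_pos, div_lt_div_iff₀ (by positivity) (by norm_num)]
  nlinarith

lemma deriv_neg (hτ : 0 < τ) {p c : ℝ} (h : c ^ 2 < p ^ 2) :
    Real.sqrt 2 / 3 - 4 * A τ p * τ / q τ c ^ 3 < 0 := by
  have hq : q τ c < q τ p := q_lt_q τ h hτ
  have hqp := q_pos τ p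
  have hqc := q_pos τ c
  have h3 : q τ c ^ 3 < q τ p ^ 3 := pow_lt_pow_left₀ hq hqc.le (by norm_num)
  have h2 : 0 < Real.sqrt 2 := Real.sqrt_pos.mpr (by norm_num)
  have key : 4 * A τ p * τ / q τ c ^ 3 = Real.sqrt 2 * q τ p ^ 3 / (3 * q τ c ^ 3) := by
    unfold A; field_simp; ring
  rw [key, sub_neg, div_lt_div_iff₀ (by norm_num) (by positivity)]
  nlinarith

lemma mono_right (hτ : 0 < τ) {p : ℝ} (hp : 0 ≤ p) :
    StrictMonoOn (F τ (A τ p)) (Ici p) := by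
  apply strictMonoOn_of_deriv_pos (convex_Ici p) (F_cont τ _).continuousOn
  intro c hc
  rw [interior_Ici] at hc
  rw [(F_hasDerivAt τ _ c).deriv]
  exact deriv_pos τ hτ (by simp at hc; nlinarith)

lemma mono_left (hτ : 0 < τ) {p : ℝ} (hp : 0 ≤ p) :
    StrictMonoOn (F τ (A τ p)) (Iic (-p)) := by
  apply strictMonoOn_of_deriv_pos (convex_Iic (-p)) (F_cont τ _).continuousOn
  intro c hc
  rw [interior_Iic] at hc
  rw [(F_hasDerivAt τ _ c).deriv]
  exact deriv_pos τ hτ (by simp at hc; nlinarith)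

lemma anti_mid (hτ : 0 < τ) {p : ℝ} :
    StrictAntiOn (F τ (A τ p)) (Icc (-p) p) := by
  apply strictAntiOn_of_deriv_neg (convex_Icc (-p) p) (F_cont τ _).continuousOn
  intro c hc
  rw [interior_Icc] at hc
  rw [(F_hasDerivAt τ _ c).deriv]
  exact deriv_neg τ hτ (sq_lt_sq' hc.1 hc.2)

lemma strictMono_F (hτ : 0 < τ) {α : ℝ} (hα : α < A τ 0) : StrictMono (F τ α) := by
  apply strictMono_of_deriv_pos
  intro c
  rw [(F_hasDerivAt τ α c).deriv]
  have hq := two_le_q τ c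
  have hqc := q_pos τ c
  have h8 : (8:ℝ) ≤ q τ c ^ 3 := by
    have := pow_le_pow_left₀ (by norm_num : (0:ℝ) ≤ 2) hq 3
    norm_num at this
    linarith
  have h2 : 0 < Real.sqrt 2 := Real.sqrt_pos.mpr (by norm_num)
  rw [A_zero] at hα
  rcases le_or_gt α 0 with h | h
  · have : 4 * α * τ / q τ c ^ 3 ≤ 0 := by
      apply div_nonpos_of_nonpos_of_nonneg (by nlinarith) (by positivity)
    linarith
  · rw [sub_pos, div_lt_iff₀ (by positivity)]
    have hα' : α * τ < 2 * Real.sqrt 2 / 3 := by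
      calc α * τ < 2 * Real.sqrt 2 / (3 * τ) * τ := mul_lt_mul_of_pos_right hα hτ
      _ = 2 * Real.sqrt 2 / 3 := by field_simp
    nlinarith [mul_nonneg h2.le (by linarith : (0:ℝ) ≤ q τ c ^ 3 - 8)]

lemma F_at_neg (hτ : 0 < τ) (p : ℝ) :
    F τ (A τ p) (-p) = Real.sqrt 2 * τ ^ 2 * p ^ 3 / 12 := by
  have h2 := q_sq τ p
  have h0 := (q_pos τ p).ne'
  rw [F, q_neg, A]
  field_simp
  linear_combination (3 * p) * h2

lemma abs_le_q (α c : ℝ) : |c * τ| ≤ q τ c := by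
  rw [← Real.sqrt_sq_eq_abs]
  exact Real.sqrt_le_sqrt (by nlinarith [sq_nonneg (c*τ)])

lemma F_lower (α c : ℝ) : Real.sqrt 2 / 3 * c - |α| ≤ F τ α c := by
  have h1 : |α * (c * τ / q τ c)| ≤ |α| := by
    rw [abs_mul]
    have : |c * τ / q τ c| ≤ 1 := by
      rw [abs_div, abs_of_pos (q_pos τ c), div_le_one (q_pos τ c)]
      exact abs_le_q τ α c
    nlinarith [abs_nonneg α, abs_nonneg (c * τ / q τ c)]
  have := neg_abs_le (α * (c * τ / q τ c))
  rw [F]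
  have := abs_le.mp h1
  linarith [this.2]

lemma exists_big (α z y : ℝ) : ∃ b, z ≤ b ∧ y < F τ α b := by
  have h2 : 0 < Real.sqrt 2 := Real.sqrt_pos.mpr (by norm_num)
  refine ⟨max z (3 * (y + |α| + 1) / Real.sqrt 2), le_max_left _ _, ?_⟩
  have hb := le_max_right z (3 * (y + |α| + 1) / Real.sqrt 2)
  set b := max z (3 * (y + |α| + 1) / Real.sqrt 2)
  have h3 : y + |α| + 1 ≤ Real.sqrt 2 / 3 * b := by
    rw [div_le_iff₀ (by positivity)] at hb
    nlinarith
  have := F_lower τ α b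
  linarith

lemma exists_small (α z y : ℝ) : ∃ a, a ≤ z ∧ F τ α a < y := by
  obtain ⟨b, hb1, hb2⟩ := exists_big τ α (-z) (-y)
  exact ⟨-b, by linarith, by rw [F_neg]; linarith⟩

lemma card_one_of_mono {α γ : ℝ} (hm : StrictMono (F τ α)) :
    {c : ℝ | F τ α c = γ}.ncard = 1 := by
  obtain ⟨a, -, ha⟩ := exists_small τ α 0 γ
  obtain ⟨b, -, hb⟩ := exists_big τ α 0 γ
  have hab : a ≤ b := (hm.lt_iff_lt.mp (by linarith)).le
  obtain ⟨c₀, -, hc₀⟩ := intermediate_value_Icc hab (F_cont τ α).continuousOn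
    (mem_Icc.mpr ⟨ha.le, hb.le⟩)
  have hSet : {c : ℝ | F τ α c = γ} = {c₀} := by
    ext x
    simp only [mem_setOf_eq, mem_singleton_iff]
    exact ⟨fun hx => hm.injective (hx.trans hc₀.symm), fun h => h ▸ hc₀⟩
  rw [hSet, Set.ncard_singleton]

lemma card_one_of_param (hτ : 0 < τ) {p γ : ℝ} (hp : 0 ≤ p)
    (hγp : F τ (A τ p) (-p) < γ) :
    {c : ℝ | F τ (A τ p) c = γ}.ncard = 1 := by
  set α := A τ p with hα
  have hbelow : ∀ c ≤ p, F τ α c < γ := by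
    intro c hc
    rcases le_total c (-p) with h | h
    · have : F τ α c ≤ F τ α (-p) :=
        (mono_left τ hτ hp).monotoneOn (mem_Iic.mpr h) (mem_Iic.mpr le_rfl) h
      linarith
    · have : F τ α c ≤ F τ α (-p) :=
        (anti_mid τ hτ).antitoneOn (mem_Icc.mpr ⟨le_rfl, by linarith⟩)
          (mem_Icc.mpr ⟨h, hc⟩) h
      linarith
  obtain ⟨b, hbp, hbγ⟩ := exists_big τ α p γ
  obtain ⟨c₀, hc₀m, hc₀⟩ := intermediate_value_Icc hbp (F_cont τ α).continuousOn
    (mem_Icc.mpr ⟨(hbelow p le_rfl).le, hbγ.le⟩)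
  have hSet : {c : ℝ | F τ α c = γ} = {c₀} := by
    ext x
    simp only [mem_setOf_eq, mem_singleton_iff]
    constructor
    · intro hx
      have hxp : p ≤ x := by
        by_contra h
        push_neg at h
        exact absurd hx (ne_of_lt (hbelow x h.le))
      exact (mono_right τ hτ hp).injOn (mem_Ici.mpr hxp) (mem_Ici.mpr hc₀m.1)
        (hx.trans hc₀.symm)
    · rintro rfl; exact hc₀
  rw [hSet, Set.ncard_singleton]

lemma card_three_of_param (hτ : 0 < τ) {p γ : ℝ} (hp : 0 < p) (hγ : 0 < γ)
    (hγp : γ < F τ (A τ p) (-p)) :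
    {c : ℝ | F τ (A τ p) c = γ}.ncard = 3 := by
  set α := A τ p with hα
  have hFp : F τ α p = - F τ α (-p) := by
    have := F_neg τ α p
    linarith
  have hM : 0 < F τ α (-p) := lt_trans hγ hγp
  -- left root
  obtain ⟨a, ha1, ha2⟩ := exists_small τ α (-p) γ
  obtain ⟨c₁, hc₁m, hc₁⟩ := intermediate_value_Icc ha1 (F_cont τ α).continuousOn
    (mem_Icc.mpr ⟨ha2.le, hγp.le⟩)
  have hc₁lt : c₁ < -p :=
    lt_of_le_of_ne hc₁m.2 (fun h => by rw [h] at hc₁; linarith)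
  -- middle root
  obtain ⟨c₂, hc₂m, hc₂⟩ := intermediate_value_Icc' (show -p ≤ p by linarith)
    (F_cont τ α).continuousOn (mem_Icc.mpr ⟨by linarith, hγp.le⟩)
  have hc₂lt1 : -p < c₂ :=
    lt_of_le_of_ne hc₂m.1 (fun h => by rw [← h] at hc₂; linarith)
  have hc₂lt2 : c₂ < p :=
    lt_of_le_of_ne hc₂m.2 (fun h => by rw [h, hFp] at hc₂; linarith)
  -- right root
  obtain ⟨b, hb1, hb2⟩ := exists_big τ α p γ
  obtain ⟨c₃, hc₃m, hc₃⟩ := intermediate_value_Icc hb1 (F_cont τ α).continuousOn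
    (mem_Icc.mpr ⟨by rw [hFp]; linarith, hb2.le⟩)
  have hc₃gt : p < c₃ :=
    lt_of_le_of_ne hc₃m.1 (fun h => by rw [← h, hFp] at hc₃; linarith)
  have hSet : {c : ℝ | F τ α c = γ} = {c₁, c₂, c₃} := by
    ext x
    simp only [mem_setOf_eq, mem_insert_iff, mem_singleton_iff]
    constructor
    · intro hx
      rcases le_total x (-p) with h | h
      · exact Or.inl ((mono_left τ hτ hp.le).injOn (mem_Iic.mpr h)
          (mem_Iic.mpr hc₁lt.le) (hx.trans hc₁.symm))
      · rcases le_total x p with h' | h'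
        · exact Or.inr (Or.inl ((anti_mid τ hτ).injOn (mem_Icc.mpr ⟨h, h'⟩)
            (mem_Icc.mpr ⟨hc₂lt1.le, hc₂lt2.le⟩) (hx.trans hc₂.symm)))
        · exact Or.inr (Or.inr ((mono_right τ hτ hp.le).injOn (mem_Ici.mpr h')
            (mem_Ici.mpr hc₃gt.le) (hx.trans hc₃.symm)))
    · rintro (rfl | rfl | rfl) <;> assumption
  exact Set.ncard_eq_three.mpr ⟨c₁, c₂, c₃, by linarith, by linarith, by linarith, hSet⟩

end EB

/-- For fixed τ̂ > 0 and γ > 0, there is α_bp > 0 such that the existence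
condition (√2/3)c = α·cτ̂/√(c²τ̂²+4) + γ has exactly one solution for
α < α_bp and exactly three solutions for α > α_bp. -/
theorem existence_condition_bifurcation (τ γ : ℝ) (hτ : 0 < τ) (hγ : 0 < γ) :
    ∃ αbp : ℝ, 0 < αbp ∧
      (∀ α : ℝ, α < αbp →
        {c : ℝ | Real.sqrt 2 / 3 * c
          = α * (c * τ / Real.sqrt (c ^ 2 * τ ^ 2 + 4)) + γ}.ncard = 1) ∧
      (∀ α : ℝ, αbp < α →
        {c : ℝ | Real.sqrt 2 / 3 * c
          = α * (c * τ / Real.sqrt (c ^ 2 * τ ^ 2 + 4)) + γ}.ncard = 3) := by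
  have hs2 : 0 < Real.sqrt 2 := Real.sqrt_pos.mpr (by norm_num)
  have hset : ∀ α : ℝ, {c : ℝ | Real.sqrt 2 / 3 * c
      = α * (c * τ / Real.sqrt (c ^ 2 * τ ^ 2 + 4)) + γ}
      = {c : ℝ | EB.F τ α c = γ} := by
    intro α
    ext c
    simp only [Set.mem_setOf_eq, EB.F, EB.q]
    constructor <;> intro h <;> linarith
  -- the bifurcation point
  have hx : (0:ℝ) < 12 * γ / (Real.sqrt 2 * τ ^ 2) := by positivity
  set pbp : ℝ := (12 * γ / (Real.sqrt 2 * τ ^ 2)) ^ ((1:ℝ)/3) with hpbp_def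
  have hpbp : 0 < pbp := Real.rpow_pos_of_pos hx _
  have hcube : Real.sqrt 2 * τ ^ 2 * pbp ^ 3 / 12 = γ := by
    have h3 : pbp ^ (3:ℕ) = 12 * γ / (Real.sqrt 2 * τ ^ 2) := by
      rw [hpbp_def, ← Real.rpow_natCast (_ ^ ((1:ℝ)/3)) 3, ← Real.rpow_mul hx.le]
      norm_num
    rw [h3]
    field_simp
  refine ⟨EB.A τ pbp, by have := EB.q_pos τ pbp; rw [EB.A]; positivity, ?_, ?_⟩
  · intro α hα
    rw [hset α]
    rcases lt_or_ge α (EB.A τ 0) with h0 | h0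
    · exact EB.card_one_of_mono τ (EB.strictMono_F τ hτ h0)
    · obtain ⟨p, hpm, hAp⟩ := intermediate_value_Icc hpbp.le (EB.A_cont τ).continuousOn
        (Set.mem_Icc.mpr ⟨h0, hα.le⟩)
      have hppbp : p < pbp :=
        lt_of_le_of_ne hpm.2 (fun h => by rw [h] at hAp; rw [← hAp] at hα; exact lt_irrefl _ hα)
      rw [← hAp]
      apply EB.card_one_of_param τ hτ hpm.1
      rw [EB.F_at_neg τ hτ]
      rw [← hcube]
      have : p ^ 3 < pbp ^ 3 := pow_lt_pow_left₀ hppbp hpm.1 (by norm_num)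
      have hτ2 : 0 < τ ^ 2 := by positivity
      nlinarith [mul_pos (mul_pos hs2 hτ2) (sub_pos.mpr this)]
  · intro α hα
    rw [hset α]
    -- find P with α < A τ P
    set P : ℝ := max pbp (max 1 (12 * (α + 1) / (Real.sqrt 2 * τ ^ 2))) with hPdef
    have hP1 : 1 ≤ P := le_trans (le_max_left _ _) (le_max_right _ _)
    have hPb : pbp ≤ P := le_max_left _ _
    have hPα : 12 * (α + 1) / (Real.sqrt 2 * τ ^ 2) ≤ P :=
      le_trans (le_max_right _ _) (le_max_right _ _)
    have hAP : α < EB.A τ P := by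
      have hq : P * τ ≤ EB.q τ P := by
        have := EB.abs_le_q τ α P
        rwa [abs_of_nonneg (by nlinarith)] at this
      have hq3 : (P * τ) ^ 3 ≤ EB.q τ P ^ 3 :=
        pow_le_pow_left₀ (by nlinarith) hq 3
      have h1 : α + 1 ≤ Real.sqrt 2 * τ ^ 2 * P / 12 := by
        rw [div_le_iff₀ (by positivity)] at hPα
        linarith
      have h2 : Real.sqrt 2 * τ ^ 2 * P / 12 ≤ Real.sqrt 2 * τ ^ 2 * P ^ 3 / 12 := by
        have : P ≤ P ^ 3 := le_self_pow₀ (by linarith) (by norm_num)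
        have hc : 0 < Real.sqrt 2 * τ ^ 2 := by positivity
        apply div_le_div_of_nonneg_right ?_ (by norm_num)
        · nlinarith
      have h3 : Real.sqrt 2 * τ ^ 2 * P ^ 3 / 12 ≤ EB.A τ P := by
        rw [EB.A, div_le_div_iff₀ (by norm_num) (by positivity)]
        nlinarith
      linarith
    obtain ⟨p, hpm, hAp⟩ := intermediate_value_Icc hPb (EB.A_cont τ).continuousOn
      (Set.mem_Icc.mpr ⟨hα.le, hAP.le⟩)
    have hppbp : pbp < p :=
      lt_of_le_of_ne hpm.1 (fun h => by rw [← h] at hAp; rw [hAp] at hα; exact lt_irrefl _ hα)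
    rw [← hAp]
    apply EB.card_three_of_param τ hτ (lt_trans hpbp hppbp) hγ
    rw [EB.F_at_neg τ hτ, ← hcube]
    have : pbp ^ 3 < p ^ 3 := pow_lt_pow_left₀ hppbp hpbp.le (by norm_num)
    have hτ2 : 0 < τ ^ 2 := by positivity
    nlinarith [mul_pos (mul_pos hs2 hτ2) (sub_pos.mpr this)]
end

section
/- Let δ ≥ 0 and f̃ : ℝ → ℝ be continuous and bounded with ‖f̃‖_∞ ≤ 1, and suppose 1 + δ·f̃(x) ≥ κ > 0 for all x. Then the Riccati equation a' = 1 + δf̃(x) - a² has a unique bounded solution a_u with inf_x a_u(x) > 0 and a unique bounded solution a_s with sup_x a_s(x) < 0; moreover ‖a_u - 1‖_∞ = O(δ) and ‖a_s + 1‖_∞ = O(δ) as δ → 0. -/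
open Real Set MeasureTheory Filter intervalIntegral

namespace RiccatiAux


lemma cont_exp_mul (c : ℝ) : Continuous fun s : ℝ => Real.exp (c * s) :=
  Real.continuous_exp.comp (continuous_const.mul continuous_id)

lemma hasDerivAt_exp_mul_div (c : ℝ) (hc : c ≠ 0) (s : ℝ) :
    HasDerivAt (fun y => Real.exp (c * y) / c) (Real.exp (c * s)) s := by
  have h1 : HasDerivAt (fun y : ℝ => c * y) c s := by
    simpa using (hasDerivAt_id s).const_mul c
  have h3 := h1.exp.div_const c
  simpa [mul_div_assoc, mul_div_cancel_right₀ _ hc] using h3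

lemma integral_exp_mul_ab (c : ℝ) (hc : c ≠ 0) (a b : ℝ) :
    ∫ s in a..b, Real.exp (c * s) = Real.exp (c * b) / c - Real.exp (c * a) / c := by
  rw [← intervalIntegral.integral_eq_sub_of_hasDerivAt
      (fun s _ => hasDerivAt_exp_mul_div c hc s)
      ((cont_exp_mul c).intervalIntegrable a b)]

lemma integrableOn_exp_mul_Iic {c : ℝ} (hc : 0 < c) (x : ℝ) :
    IntegrableOn (fun s => Real.exp (c * s)) (Iic x) := by
  refine integrableOn_Iic_of_intervalIntegral_norm_bounded (Real.exp (c * x) / c) x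
    (fun y => ((cont_exp_mul c).intervalIntegrable y x).1) tendsto_id ?_
  filter_upwards [Iic_mem_atBot x] with y hy
  rw [intervalIntegral.integral_congr (g := fun s => Real.exp (c * s))
      (fun s _ => norm_of_nonneg (Real.exp_pos _).le)]
  show (∫ s in (id y : ℝ)..x, Real.exp (c * s)) ≤ _
  rw [id, integral_exp_mul_ab c hc.ne']
  have : 0 ≤ Real.exp (c * y) / c := div_nonneg (Real.exp_pos _).le hc.le
  linarith

lemma integral_exp_mul_Iic {c : ℝ} (hc : 0 < c) (x : ℝ) :
    ∫ s in Iic x, Real.exp (c * s) = Real.exp (c * x) / c := by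
  refine tendsto_nhds_unique
    (intervalIntegral_tendsto_integral_Iic _ (integrableOn_exp_mul_Iic hc x) tendsto_id) ?_
  have heq : (fun y : ℝ => ∫ s in (id y : ℝ)..x, Real.exp (c * s)) =
      fun y => Real.exp (c * x) / c - Real.exp (c * y) / c := by
    funext y; rw [id, integral_exp_mul_ab c hc.ne']
  rw [show (fun i : ℝ => ∫ s in (id i : ℝ)..x, Real.exp (c * s)) = _ from heq]
  have h1 : Tendsto (fun y : ℝ => Real.exp (c * y) / c) atBot (nhds 0) := by
    have h0 : Tendsto (fun y : ℝ => c * y) atBot atBot :=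
      (tendsto_const_mul_atBot_of_pos hc).mpr tendsto_id
    simpa using (Real.tendsto_exp_atBot.comp h0).div_const c
  simpa using (tendsto_const_nhds (x := Real.exp (c * x) / c)).sub h1



lemma integrableOn_exp_mul_bound {c B : ℝ} (hc : 0 < c) {g : ℝ → ℝ} (hg : Continuous g)
    (hB : ∀ s, |g s| ≤ B) (x : ℝ) :
    IntegrableOn (fun s => Real.exp (c * s) * g s) (Iic x) := by
  have hker : IntegrableOn (fun s => Real.exp (c * s)) (Iic x) :=
    integrableOn_exp_mul_Iic hc x
  refine Integrable.mono' (hker.const_mul B) ?_ ?_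
  · exact ((Real.continuous_exp.comp (continuous_const.mul continuous_id)).mul hg).aestronglyMeasurable
  · filter_upwards with s
    have h1 : |Real.exp (c * s) * g s| = Real.exp (c * s) * |g s| := by
      rw [abs_mul, abs_of_nonneg (Real.exp_pos _).le]
    rw [Real.norm_eq_abs, h1, mul_comm B _]
    exact mul_le_mul_of_nonneg_left (hB s) (Real.exp_pos _).le

lemma hasDerivAt_integral_Iic {F : ℝ → ℝ} (hF : Continuous F)
    (hInt : ∀ x, IntegrableOn F (Iic x)) (x : ℝ) :
    HasDerivAt (fun y => ∫ s in Iic y, F s) (F x) x := by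
  have heq : ∀ y, ∫ s in Iic y, F s = (∫ s in Iic (0:ℝ), F s) + ∫ s in (0:ℝ)..y, F s := by
    intro y
    have := intervalIntegral.integral_Iic_sub_Iic (hInt 0) (hInt y)
    linarith
  have hD : HasDerivAt (fun y => (∫ s in Iic (0:ℝ), F s) + ∫ s in (0:ℝ)..y, F s) (F x) x := by
    refine HasDerivAt.const_add _ ?_
    exact intervalIntegral.integral_hasDerivAt_right (hF.intervalIntegrable _ _)
      (hF.stronglyMeasurableAtFilter _ _) hF.continuousAt
  exact hD.congr_of_eventuallyEq (Filter.Eventually.of_forall heq)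

lemma exists_sol {q : ℝ → ℝ} {m M : ℝ} (hq : Continuous q) (hm : 0 < m) (hmM : m ≤ M)
    (hlo : ∀ x, m ^ 2 ≤ q x) (hhi : ∀ x, q x ≤ M ^ 2) :
    ∃ a : ℝ → ℝ, (∀ x, HasDerivAt a (q x - a x ^ 2) x) ∧ ∀ x, a x ∈ Icc m M := by
  have hM : 0 < M := lt_of_lt_of_le hm hmM
  have h2M : 0 < 2 * M := by linarith
  -- the closed subset of bounded continuous functions
  set S : Set (BoundedContinuousFunction ℝ ℝ) := {u | ∀ x, u x ∈ Icc m M} with hS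
  have hSclosed : IsClosed S := by
    have : S = ⋂ x : ℝ, (fun u : BoundedContinuousFunction ℝ ℝ => u x) ⁻¹' (Icc m M) := by
      ext u; simp [hS, Set.mem_iInter]
    rw [this]
    exact isClosed_iInter fun x =>
      (isClosed_Icc).preimage (continuous_eval_const x)
  haveI : CompleteSpace S := hSclosed.completeSpace_coe
  haveI : Nonempty S := ⟨⟨BoundedContinuousFunction.const ℝ M, fun x => ⟨hmM, le_refl M⟩⟩⟩
  -- the nonlinearity
  set g : S → ℝ → ℝ := fun u s => q s + 2 * M * (u.1 s) - (u.1 s) ^ 2 with hgdef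
  have hgcont : ∀ u : S, Continuous (g u) := fun u =>
    (hq.add (continuous_const.mul u.1.continuous)).sub (u.1.continuous.pow 2)
  have hg_lb : ∀ (u : S) (s : ℝ), 2 * M * m ≤ g u s := by
    intro u s
    have h1 := (u.2 s).1; have h2 := (u.2 s).2; have h3 := hlo s
    simp only [hgdef]; nlinarith
  have hg_ub : ∀ (u : S) (s : ℝ), g u s ≤ 2 * M ^ 2 := by
    intro u s
    have h1 := (u.2 s).1; have h2 := (u.2 s).2; have h3 := hhi s
    simp only [hgdef]; nlinarith
  have hg_abs : ∀ (u : S) (s : ℝ), |g u s| ≤ 2 * M ^ 2 := by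
    intro u s
    have := hg_lb u s; have := hg_ub u s
    rw [abs_le]; constructor <;> nlinarith
  have hInt : ∀ (u : S) (x : ℝ),
      IntegrableOn (fun s => Real.exp (2 * M * s) * g u s) (Iic x) :=
    fun u x => integrableOn_exp_mul_bound h2M (hgcont u) (hg_abs u) x
  -- the map
  set Tf : S → ℝ → ℝ :=
    fun u x => Real.exp (-(2 * M) * x) * ∫ s in Iic x, Real.exp (2 * M * s) * g u s with hTf
  have hexp_prod : ∀ x : ℝ, Real.exp (-(2 * M) * x) * Real.exp (2 * M * x) = 1 := by
    intro x; rw [← Real.exp_add]; ring_nf; exact Real.exp_zero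
  have hTderiv : ∀ (u : S) (x : ℝ),
      HasDerivAt (Tf u) (g u x - 2 * M * Tf u x) x := by
    intro u x
    have h1 : HasDerivAt (fun y : ℝ => Real.exp (-(2 * M) * y))
        (-(2 * M) * Real.exp (-(2 * M) * x)) x := by
      have := ((hasDerivAt_id x).const_mul (-(2 * M))).exp
      simpa [mul_comm] using this
    have h2 : HasDerivAt (fun y : ℝ => ∫ s in Iic y, Real.exp (2 * M * s) * g u s)
        (Real.exp (2 * M * x) * g u x) x :=
      hasDerivAt_integral_Iic ((Real.continuous_exp.comp
        (continuous_const.mul continuous_id)).mul (hgcont u)) (hInt u) x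
    have h3 := h1.mul h2
    have heq : -(2 * M) * Real.exp (-(2 * M) * x) * (∫ s in Iic x, Real.exp (2 * M * s) * g u s)
        + Real.exp (-(2 * M) * x) * (Real.exp (2 * M * x) * g u x)
        = g u x - 2 * M * Tf u x := by
      have h4 := hexp_prod x
      simp only [hTf]
      linear_combination (g u x) * h4
    rw [heq] at h3
    exact h3
  -- bounds
  have hTmem : ∀ (u : S) (x : ℝ), Tf u x ∈ Icc m M := by
    intro u x
    have hIlow : (2 * M * m) * (Real.exp (2 * M * x) / (2 * M)) ≤
        ∫ s in Iic x, Real.exp (2 * M * s) * g u s := by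
      have h1 : ∫ s in Iic x, (2 * M * m) * Real.exp (2 * M * s) =
          (2 * M * m) * (Real.exp (2 * M * x) / (2 * M)) := by
        rw [MeasureTheory.integral_const_mul, integral_exp_mul_Iic h2M]
      rw [← h1]
      refine setIntegral_mono_on ?_ (hInt u x) measurableSet_Iic ?_
      · exact (integrableOn_exp_mul_Iic h2M x).const_mul (2 * M * m)
      · intro s _
        have := hg_lb u s
        have he := (Real.exp_pos (2 * M * s)).le
        nlinarith
    have hIhigh : (∫ s in Iic x, Real.exp (2 * M * s) * g u s) ≤
        (2 * M ^ 2) * (Real.exp (2 * M * x) / (2 * M)) := by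
      have h1 : ∫ s in Iic x, (2 * M ^ 2) * Real.exp (2 * M * s) =
          (2 * M ^ 2) * (Real.exp (2 * M * x) / (2 * M)) := by
        rw [MeasureTheory.integral_const_mul, integral_exp_mul_Iic h2M]
      rw [← h1]
      refine setIntegral_mono_on (hInt u x) ?_ measurableSet_Iic ?_
      · exact (integrableOn_exp_mul_Iic h2M x).const_mul (2 * M ^ 2)
      · intro s _
        have := hg_ub u s
        have he := (Real.exp_pos (2 * M * s)).le
        nlinarith
    have hep := Real.exp_pos (-(2 * M) * x)
    have h4 := hexp_prod x
    constructor
    · have := mul_le_mul_of_nonneg_left hIlow hep.le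
      simp only [hTf]
      calc m = m * (Real.exp (-(2*M)*x) * Real.exp (2*M*x)) := by rw [h4]; ring
        _ = Real.exp (-(2*M)*x) * ((2 * M * m) * (Real.exp (2 * M * x) / (2 * M))) := by
            field_simp
        _ ≤ _ := this
    · have := mul_le_mul_of_nonneg_left hIhigh hep.le
      simp only [hTf]
      calc Real.exp (-(2*M)*x) * (∫ s in Iic x, Real.exp (2 * M * s) * g u s)
          ≤ Real.exp (-(2*M)*x) * ((2 * M ^ 2) * (Real.exp (2 * M * x) / (2 * M))) := this
        _ = M * (Real.exp (-(2*M)*x) * Real.exp (2*M*x)) := by field_simp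
        _ = M := by rw [h4]; ring
  -- T as a self-map of S
  have hTcont : ∀ u : S, Continuous (Tf u) := by
    intro u
    exact continuous_iff_continuousAt.mpr fun x => (hTderiv u x).continuousAt
  have hTbd : ∀ (u : S) (x : ℝ), ‖Tf u x‖ ≤ M := by
    intro u x
    rw [Real.norm_eq_abs, abs_le]
    exact ⟨by linarith [(hTmem u x).1], (hTmem u x).2⟩
  set T : S → S := fun u =>
    ⟨BoundedContinuousFunction.ofNormedAddCommGroup (Tf u) (hTcont u) M (hTbd u),
      fun x => hTmem u x⟩ with hT
  -- contraction
  set K : NNReal := ⟨1 - m / M, by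
    have : m / M ≤ 1 := (div_le_one hM).mpr hmM
    linarith⟩ with hK
  have hK1 : K < 1 := by
    rw [← NNReal.coe_lt_coe]
    simp only [hK, NNReal.coe_mk, NNReal.coe_one]
    have : 0 < m / M := div_pos hm hM
    show (1:ℝ) - m / M < 1
    linarith
  have hdistS : ∀ u v : S, dist u v = dist u.1 v.1 := fun u v => rfl
  have hcontraction : ∀ u v : S, dist (T u) (T v) ≤ (K : ℝ) * dist u v := by
    intro u v
    rw [hdistS]
    refine (BoundedContinuousFunction.dist_le (by positivity)).mpr fun x => ?_
    have hduv : ∀ s : ℝ, |u.1 s - v.1 s| ≤ dist u v := by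
      intro s
      rw [hdistS]
      exact (Real.dist_eq _ _ ▸ BoundedContinuousFunction.dist_coe_le_dist s)
    have hgd : ∀ s : ℝ, |g u s - g v s| ≤ 2 * (M - m) * dist u v := by
      intro s
      have h1 : g u s - g v s = (u.1 s - v.1 s) * (2 * M - u.1 s - v.1 s) := by
        simp only [hgdef]; ring
      rw [h1, abs_mul]
      have h2 : |2 * M - u.1 s - v.1 s| ≤ 2 * (M - m) := by
        have hu1 := (u.2 s).1; have hu2 := (u.2 s).2
        have hv1 := (v.2 s).1; have hv2 := (v.2 s).2
        rw [abs_le]; constructor <;> nlinarith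
      calc |u.1 s - v.1 s| * |2 * M - u.1 s - v.1 s|
          ≤ dist u v * (2 * (M - m)) :=
            mul_le_mul (hduv s) h2 (abs_nonneg _) dist_nonneg
        _ = 2 * (M - m) * dist u v := by ring
    have hTdiff : (T u).1 x - (T v).1 x = Real.exp (-(2 * M) * x) *
        ∫ s in Iic x, Real.exp (2 * M * s) * (g u s - g v s) := by
      have hsub : ∫ s in Iic x, Real.exp (2 * M * s) * (g u s - g v s) =
          (∫ s in Iic x, Real.exp (2 * M * s) * g u s) -
          ∫ s in Iic x, Real.exp (2 * M * s) * g v s := by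
        rw [← MeasureTheory.integral_sub (hInt u x) (hInt v x)]
        congr 1; funext s; ring
      rw [hsub]
      show Tf u x - Tf v x = _
      simp only [hTf]; ring
    have habs0 : |∫ s in Iic x, Real.exp (2 * M * s) * (g u s - g v s)| ≤
        ∫ s in Iic x, Real.exp (2 * M * s) * |g u s - g v s| := by
      have := MeasureTheory.norm_integral_le_integral_norm
        (μ := volume.restrict (Iic x)) (fun s => Real.exp (2 * M * s) * (g u s - g v s))
      simpa [Real.norm_eq_abs, abs_mul, abs_of_nonneg (Real.exp_pos _).le] using this
    have hintd : IntegrableOn (fun s => Real.exp (2 * M * s) * (g u s - g v s)) (Iic x) :=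
      integrableOn_exp_mul_bound h2M ((hgcont u).sub (hgcont v)) (fun s => hgd s) x
    have hintd2 : IntegrableOn (fun s => Real.exp (2 * M * s) * |g u s - g v s|) (Iic x) :=
      hintd.abs.congr (Filter.Eventually.of_forall (fun s => by
        simp [abs_mul, abs_of_nonneg (Real.exp_pos (2*M*s)).le]))
    have h5 : |∫ s in Iic x, Real.exp (2 * M * s) * (g u s - g v s)| ≤
        (2 * (M - m) * dist u v) * (Real.exp (2 * M * x) / (2 * M)) := by
      refine habs0.trans ?_
      have h6 : ∫ s in Iic x, (2 * (M - m) * dist u v) * Real.exp (2 * M * s) =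
          (2 * (M - m) * dist u v) * (Real.exp (2 * M * x) / (2 * M)) := by
        rw [MeasureTheory.integral_const_mul, integral_exp_mul_Iic h2M]
      rw [← h6]
      refine setIntegral_mono_on hintd2 ?_ measurableSet_Iic ?_
      · exact (integrableOn_exp_mul_Iic h2M x).const_mul (2 * (M - m) * dist u v)
      · intro s _
        have := hgd s
        have he := (Real.exp_pos (2 * M * s)).le
        nlinarith
    have habs : |(T u).1 x - (T v).1 x| ≤ (1 - m / M) * dist u v := by
      rw [hTdiff, abs_mul, abs_of_nonneg (Real.exp_pos _).le]
      have h7 := mul_le_mul_of_nonneg_left h5 (Real.exp_pos (-(2*M)*x)).le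
      refine h7.trans (le_of_eq ?_)
      have h4 := hexp_prod x
      have h8 : Real.exp (-(2*M)*x) * (2*(M-m)*dist u v * (Real.exp (2*M*x)/(2*M)))
          = ((M-m)/M * dist u v) * (Real.exp (-(2*M)*x) * Real.exp (2*M*x)) := by
        field_simp
      rw [h8, h4, mul_one]
      field_simp
    have hfin : dist ((T u).1 x) ((T v).1 x) ≤ (1 - m/M) * dist u v := by
      rw [Real.dist_eq]; exact habs
    calc dist ((T u).1 x) ((T v).1 x) ≤ (1 - m/M) * dist u v := hfin
      _ = (K : ℝ) * dist u v := rfl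
  have hCW : ContractingWith K T :=
    ⟨hK1, LipschitzWith.of_dist_le_mul hcontraction⟩
  -- fixed point
  set a : S := hCW.fixedPoint T with ha
  have hfix : T a = a := hCW.fixedPoint_isFixedPt
  refine ⟨a.1, fun x => ?_, fun x => a.2 x⟩
  have hfx : Tf a = a.1 := by
    have := congrArg (fun u : S => (u.1 : ℝ → ℝ)) hfix
    exact this
  have hD := hTderiv a x
  rw [hfx] at hD
  have : g a x - 2 * M * a.1 x = q x - a.1 x ^ 2 := by simp only [hgdef]; ring
  rw [this] at hD
  exact hD



lemma uniq {q a₁ a₂ : ℝ → ℝ} {m B : ℝ} (hm : 0 < m)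
    (h₁ : ∀ x, HasDerivAt a₁ (q x - a₁ x ^ 2) x)
    (h₂ : ∀ x, HasDerivAt a₂ (q x - a₂ x ^ 2) x)
    (hsum : ∀ x, 2 * m ≤ a₁ x + a₂ x)
    (hB : ∀ x, |a₁ x - a₂ x| ≤ B) : ∀ x, a₁ x = a₂ x := by
  have hc : Continuous fun x => a₁ x + a₂ x :=
    (continuous_iff_continuousAt.mpr fun x => (h₁ x).continuousAt).add
      (continuous_iff_continuousAt.mpr fun x => (h₂ x).continuousAt)
  set A : ℝ → ℝ := fun x => ∫ t in (0:ℝ)..x, (a₁ t + a₂ t) with hA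
  have hAd : ∀ x, HasDerivAt A (a₁ x + a₂ x) x := fun x =>
    intervalIntegral.integral_hasDerivAt_right (hc.intervalIntegrable _ _)
      (hc.stronglyMeasurableAtFilter _ _) hc.continuousAt
  set h : ℝ → ℝ := fun x => (a₁ x - a₂ x) * Real.exp (A x) with hh
  have hhd : ∀ x, HasDerivAt h 0 x := by
    intro x
    have hd1 := ((h₁ x).sub (h₂ x)).mul ((hAd x).exp)
    have : (q x - a₁ x ^ 2 - (q x - a₂ x ^ 2)) * Real.exp (A x) +
        (a₁ x - a₂ x) * (Real.exp (A x) * (a₁ x + a₂ x)) = 0 := by ring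
    rw [Pi.sub_apply] at hd1
    rwa [this] at hd1
  have hconst : ∀ x, h x = h 0 := by
    intro x
    have : ∀ y : ℝ, h y = h y := fun y => rfl
    have hdiff : Differentiable ℝ h := fun y => (hhd y).differentiableAt
    have hder : ∀ y, deriv h y = 0 := fun y => (hhd y).deriv
    exact is_const_of_deriv_eq_zero hdiff hder x 0
  have hA0 : A 0 = 0 := by simp [hA]
  have hkey : ∀ x, (a₁ x - a₂ x) * Real.exp (A x) = a₁ 0 - a₂ 0 := by
    intro x
    have := hconst x
    simpa [hh, hA0] using this
  -- show a₁ 0 = a₂ 0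
  have hzero : a₁ 0 - a₂ 0 = 0 := by
    by_contra h0
    have hw0 : 0 < |a₁ 0 - a₂ 0| := abs_pos.mpr h0
    have hBpos : 0 ≤ B := le_trans (abs_nonneg _) (hB 0)
    set t : ℝ := (B + 1) / |a₁ 0 - a₂ 0| with ht
    have htpos : 0 < t := div_pos (by linarith) hw0
    set x₀ : ℝ := -(t / (2 * m)) with hx₀
    have hx₀neg : x₀ ≤ 0 := by
      have := div_nonneg htpos.le (by linarith : (0:ℝ) ≤ 2 * m)
      simp [hx₀]; linarith
    -- A x₀ ≤ 2 m x₀ = -t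
    have hAle : A x₀ ≤ 2 * m * x₀ := by
      have h1 : A x₀ = -∫ t in x₀..(0:ℝ), (a₁ t + a₂ t) := by
        rw [hA]; rw [← intervalIntegral.integral_symm]
      have h2 : (2 * m) * (0 - x₀) ≤ ∫ t in x₀..(0:ℝ), (a₁ t + a₂ t) := by
        have h2' := intervalIntegral.integral_mono_on hx₀neg
          (_root_.intervalIntegrable_const (μ := volume) (c := 2*m)) (hc.intervalIntegrable _ _)
          (fun s _ => hsum s)
        simp at h2'
        nlinarith [h2']
      rw [h1]; linarith
    have h2mx : 2 * m * x₀ = -t := by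
      rw [hx₀]; field_simp
    have hexp : Real.exp t ≤ Real.exp (-A x₀) := by
      apply Real.exp_le_exp.mpr
      have : A x₀ ≤ -t := by rw [← h2mx]; exact hAle
      linarith
    have hwx : |a₁ x₀ - a₂ x₀| = |a₁ 0 - a₂ 0| * Real.exp (-A x₀) := by
      have := hkey x₀
      have h3 : a₁ x₀ - a₂ x₀ = (a₁ 0 - a₂ 0) * Real.exp (-A x₀) := by
        have hne := (Real.exp_pos (A x₀)).ne'
        rw [Real.exp_neg, ← hkey x₀, mul_assoc, mul_inv_cancel₀ hne, mul_one]
      rw [h3, abs_mul, abs_of_nonneg (Real.exp_pos _).le]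
    have hbig : B + 1 ≤ |a₁ x₀ - a₂ x₀| := by
      rw [hwx]
      calc B + 1 = |a₁ 0 - a₂ 0| * t := by rw [ht]; field_simp
        _ ≤ |a₁ 0 - a₂ 0| * Real.exp t := by
            have := Real.add_one_le_exp t
            nlinarith
        _ ≤ |a₁ 0 - a₂ 0| * Real.exp (-A x₀) :=
            mul_le_mul_of_nonneg_left hexp (abs_nonneg _)
    linarith [hB x₀]
  intro x
  have := hkey x
  rw [hzero] at this
  have := mul_eq_zero.mp this
  rcases this with h | h
  · linarith
  · exact absurd h (Real.exp_pos _).ne'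


lemma reflect {q b : ℝ → ℝ} (hb : ∀ x, HasDerivAt b (q x - b x ^ 2) x) (x : ℝ) :
    HasDerivAt (fun y => -b (-y)) (q (-x) - (-b (-x)) ^ 2) x := by
  have h1 : HasDerivAt (fun y : ℝ => -y) (-1) x := (hasDerivAt_id x).neg
  have h2 := ((hb (-x)).comp x h1).neg
  refine HasDerivAt.congr_deriv h2 ?_
  ring


lemma bound_aux {κ δ y : ℝ} (hκ : 0 < κ) (hδ : 0 ≤ δ)
    (hy1 : Real.sqrt (max κ (1 - δ)) ≤ y) (hy2 : y ≤ Real.sqrt (1 + δ)) :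
    |y - 1| ≤ (1 + (min κ 1)⁻¹) * δ := by
  have ht0 : 0 < min κ 1 := lt_min hκ one_pos
  have ht1 : min κ 1 ≤ 1 := min_le_right _ _
  have hti : 0 < (min κ 1)⁻¹ := inv_pos.mpr ht0
  have hδC : δ ≤ (1 + (min κ 1)⁻¹) * δ := by nlinarith
  have hupper : y - 1 ≤ (1 + (min κ 1)⁻¹) * δ := by
    have hs : Real.sqrt (1 + δ) ≤ 1 + δ := by
      have h1 := Real.sqrt_nonneg (1 + δ)
      nlinarith [Real.sq_sqrt (show (0:ℝ) ≤ 1 + δ by linarith)]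
    linarith
  have hlower : 1 - y ≤ (1 + (min κ 1)⁻¹) * δ := by
    rcases le_or_gt (min κ 1) δ with hc | hc
    · have h1 : 1 - y ≤ 1 := by
        have := (Real.sqrt_nonneg (max κ (1 - δ))).trans hy1
        linarith
      have h3 : min κ 1 * (min κ 1)⁻¹ = 1 := mul_inv_cancel₀ ht0.ne'
      have h2 : (1:ℝ) ≤ (min κ 1)⁻¹ * δ := by nlinarith
      nlinarith
    · have hδ1 : δ ≤ 1 := by linarith
      have h1 : (1:ℝ) - δ ≤ Real.sqrt (1 - δ) := by
        have h2 := Real.sqrt_nonneg (1 - δ)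
        nlinarith [Real.sq_sqrt (show (0:ℝ) ≤ 1 - δ by linarith)]
      have h3 : Real.sqrt (1 - δ) ≤ Real.sqrt (max κ (1 - δ)) :=
        Real.sqrt_le_sqrt (le_max_right κ (1 - δ))
      have : 1 - y ≤ δ := by linarith
      nlinarith
  rw [abs_le]; constructor <;> linarith


end RiccatiAux

open RiccatiAux

/-- For δ ≥ 0 and bounded continuous f̃ with ‖f̃‖_∞ ≤ 1 and 1 + δf̃ ≥ κ > 0,
the Riccati equation a' = 1 + δf̃(x) - a² has a unique bounded solution a_u
with inf a_u > 0 and a unique bounded solution a_s with sup a_s < 0; moreover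
‖a_u - 1‖_∞ = O(δ) and ‖a_s + 1‖_∞ = O(δ) as δ → 0 (uniformly given κ). -/
theorem riccati_bounded_solutions (κ : ℝ) (hκ : 0 < κ) :
    ∃ C : ℝ, 0 < C ∧
      ∀ δ : ℝ, 0 ≤ δ →
        ∀ f : ℝ → ℝ, Continuous f → (∀ x, |f x| ≤ 1) →
          (∀ x, κ ≤ 1 + δ * f x) →
          (∃! a : ℝ → ℝ,
            (∀ x, HasDerivAt a (1 + δ * f x - a x ^ 2) x) ∧
            (∃ M : ℝ, ∀ x, |a x| ≤ M) ∧ (∃ m > 0, ∀ x, m ≤ a x)) ∧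
          (∃! a : ℝ → ℝ,
            (∀ x, HasDerivAt a (1 + δ * f x - a x ^ 2) x) ∧
            (∃ M : ℝ, ∀ x, |a x| ≤ M) ∧ (∃ m > 0, ∀ x, a x ≤ -m)) ∧
          (∀ a : ℝ → ℝ,
            (∀ x, HasDerivAt a (1 + δ * f x - a x ^ 2) x) →
            (∃ M : ℝ, ∀ x, |a x| ≤ M) → (∃ m > 0, ∀ x, m ≤ a x) →
            ∀ x, |a x - 1| ≤ C * δ) ∧
          (∀ a : ℝ → ℝ,
            (∀ x, HasDerivAt a (1 + δ * f x - a x ^ 2) x) →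
            (∃ M : ℝ, ∀ x, |a x| ≤ M) → (∃ m > 0, ∀ x, a x ≤ -m) →
            ∀ x, |a x + 1| ≤ C * δ) := by
  have ht0 : 0 < min κ 1 := lt_min hκ one_pos
  refine ⟨1 + (min κ 1)⁻¹, by positivity, ?_⟩
  intro δ hδ f hf hf1 hκf
  set q : ℝ → ℝ := fun x => 1 + δ * f x with hqdef
  have hqc : Continuous q := continuous_const.add (continuous_const.mul hf)
  set qlo : ℝ := max κ (1 - δ) with hqlodef
  set qhi : ℝ := 1 + δ with hqhidef
  have hqlo_pos : 0 < qlo := lt_max_iff.mpr (Or.inl hκ)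
  have hκ1 : κ ≤ 1 + δ := by
    have h1 := hκf 0
    have h2 := (abs_le.mp (hf1 0)).2
    nlinarith
  have hqloqhi : qlo ≤ qhi := max_le hκ1 (by simp [hqhidef]; linarith)
  set m : ℝ := Real.sqrt qlo with hmdef
  set M : ℝ := Real.sqrt qhi with hMdef
  have hm0 : 0 < m := Real.sqrt_pos.mpr hqlo_pos
  have hmM : m ≤ M := Real.sqrt_le_sqrt hqloqhi
  have hM0 : 0 < M := lt_of_lt_of_le hm0 hmM
  have hmsq : m ^ 2 = qlo := Real.sq_sqrt hqlo_pos.le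
  have hMsq : M ^ 2 = qhi := Real.sq_sqrt (by positivity)
  have hlo : ∀ x, m ^ 2 ≤ q x := by
    intro x
    rw [hmsq]
    refine max_le (hκf x) ?_
    have := (abs_le.mp (hf1 x)).1
    simp only [hqdef]
    nlinarith
  have hhi : ∀ x, q x ≤ M ^ 2 := by
    intro x
    rw [hMsq]
    have := (abs_le.mp (hf1 x)).2
    simp only [hqdef, hqhidef]
    nlinarith
  obtain ⟨a, haD, haM⟩ := exists_sol hqc hm0 hmM hlo hhi
  have haabs : ∀ x, |a x| ≤ M := fun x =>
    abs_le.mpr ⟨by linarith [(haM x).1], (haM x).2⟩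
  -- reflected problem
  obtain ⟨a', ha'D, ha'M⟩ := exists_sol (q := fun x => q (-x))
    (hqc.comp continuous_neg) hm0 hmM (fun x => hlo (-x)) (fun x => hhi (-x))
  set as : ℝ → ℝ := fun x => -a' (-x) with hasdef
  have hasD : ∀ x, HasDerivAt as (q x - as x ^ 2) x := by
    intro x
    have h3 := reflect (q := fun y => q (-y)) ha'D x
    have h2 : HasDerivAt (fun y => -a' (-y)) (q x - (-a' (-x)) ^ 2) x := by
      try simp only [neg_neg] at h3
      exact h3
    exact h2
  have hasabs : ∀ x, |as x| ≤ M := by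
    intro x
    have h1 := (ha'M (-x)).1; have h2 := (ha'M (-x)).2
    show |-a' (-x)| ≤ M
    rw [abs_neg, abs_le]
    constructor <;> linarith [hm0]
  have hasub : ∀ x, as x ≤ -m := by
    intro x
    have h1 := (ha'M (-x)).1
    show -a' (-x) ≤ -m
    linarith
  -- uniqueness helpers
  have huniq_pos : ∀ b : ℝ → ℝ, (∀ x, HasDerivAt b (q x - b x ^ 2) x) →
      (∃ Mb : ℝ, ∀ x, |b x| ≤ Mb) → (∃ mb > 0, ∀ x, mb ≤ b x) → ∀ x, b x = a x := by
    rintro b hbD ⟨Mb, hbB⟩ ⟨mb, hmb, hblb⟩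
    refine uniq (m := (mb + m) / 2) (by linarith) hbD haD ?_ (B := Mb + M) ?_
    · intro x
      have := hblb x; have := (haM x).1
      linarith
    · intro x
      calc |b x - a x| ≤ |b x| + |a x| := abs_sub _ _
        _ ≤ Mb + M := add_le_add (hbB x) (haabs x)
  have huniq_neg : ∀ b : ℝ → ℝ, (∀ x, HasDerivAt b (q x - b x ^ 2) x) →
      (∃ Mb : ℝ, ∀ x, |b x| ≤ Mb) → (∃ mb > 0, ∀ x, b x ≤ -mb) → ∀ x, b x = as x := by
    rintro b hbD ⟨Mb, hbB⟩ ⟨mb, hmb, hbub⟩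
    have hrbD : ∀ x, HasDerivAt (fun y => -b (-y)) ((fun y => q (-y)) x - (-b (-x)) ^ 2) x :=
      fun x => reflect hbD x
    have hkey : ∀ x, -b (-x) = a' x := by
      refine uniq (m := (mb + m) / 2) (by linarith) hrbD ha'D ?_ (B := Mb + M) ?_
      · intro x
        have := hbub (-x); have := (ha'M x).1
        linarith
      · intro x
        have h1 : |(-b (-x)) - a' x| ≤ |b (-x)| + |a' x| := by
          rw [show (-b (-x)) - a' x = -(b (-x) + a' x) by ring, abs_neg]
          exact (abs_add_le _ _).trans (by rfl)
        refine h1.trans (add_le_add (hbB (-x)) ?_)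
        have h2 := (ha'M x).1; have h3 := (ha'M x).2
        rw [abs_le]; constructor <;> linarith
    intro x
    have := hkey (-x)
    simp only [neg_neg] at this
    show b x = -a' (- x)
    linarith
  have hCδ : ∀ y : ℝ, m ≤ y → y ≤ M → |y - 1| ≤ (1 + (min κ 1)⁻¹) * δ := by
    intro y hy1 hy2
    exact bound_aux hκ hδ hy1 hy2
  refine ⟨⟨a, ⟨haD, ⟨M, haabs⟩, ⟨m, hm0, fun x => (haM x).1⟩⟩, ?_⟩,
    ⟨as, ⟨hasD, ⟨M, hasabs⟩, ⟨m, hm0, hasub⟩⟩, ?_⟩, ?_, ?_⟩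
  · rintro b ⟨hbD, hbB, hblb⟩
    exact funext (huniq_pos b hbD hbB hblb)
  · rintro b ⟨hbD, hbB, hbub⟩
    exact funext (huniq_neg b hbD hbB hbub)
  · intro b hbD hbB hblb x
    rw [huniq_pos b hbD hbB hblb x]
    exact hCδ (a x) (haM x).1 (haM x).2
  · intro b hbD hbB hbub x
    rw [huniq_neg b hbD hbB hbub x]
    have : |as x + 1| = |a' (-x) - 1| := by
      show |-a' (-x) + 1| = _
      rw [show -a' (-x) + 1 = -(a' (-x) - 1) by ring, abs_neg]
    rw [this]
    exact hCδ (a' (-x)) (ha'M (-x)).1 (ha'M (-x)).2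
end
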